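/- Let f be a convex (or concave), continuous and strictly monotone function on a nontrivial bounded interval [a,b], with nonzero right derivative f'_r(a) at a and nonzero left derivative f'_l(b) at b, and let ℓ_f be the chord of f on [a,b]. Then ∫_a^b |f - ℓ_f| dμ ≤ ((f(b)-f(a))²/8)·|1/f'_r(a) - 1/f'_l(b)| (with the convention 1/(±∞) = 0). -/

import Mathlib

open Set intervalIntegral

lemma aux_right (a b : ℝ) (hab : a < b) (f : ℝ → ℝ) (hm : StrictMonoOn f (Set.Icc a b))
    (fa' : ℝ) (ha : HasDerivWithinAt f fa' (Set.Ici a) a) : 0 ≤ fa' := by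
  have h := (hasDerivWithinAt_iff_tendsto_slope' (self_notMem_Ioi)).mp
    (ha.mono Set.Ioi_subset_Ici_self)
  refine ge_of_tendsto h ?_
  filter_upwards [Ioo_mem_nhdsGT hab] with x hx
  have hfx : f a < f x := hm ⟨le_rfl, hab.le⟩ ⟨hx.1.le, hx.2.le⟩ hx.1
  rw [slope_def_field]
  apply div_nonneg <;> linarith [hx.1]

lemma aux_left (a b : ℝ) (hab : a < b) (f : ℝ → ℝ) (hm : StrictMonoOn f (Set.Icc a b))
    (fb' : ℝ) (hb : HasDerivWithinAt f fb' (Set.Iic b) b) : 0 ≤ fb' := by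
  have h := (hasDerivWithinAt_iff_tendsto_slope' (self_notMem_Iio)).mp
    (hb.mono Set.Iio_subset_Iic_self)
  refine ge_of_tendsto h ?_
  filter_upwards [Ioo_mem_nhdsLT hab] with x hx
  have hfx : f x < f b := hm ⟨hx.1.le, hx.2.le⟩ ⟨hab.le, le_rfl⟩ hx.2
  rw [slope_def_field]
  exact le_of_lt (div_pos_of_neg_of_neg (by linarith) (by linarith [hx.2]))

lemma key (a b : ℝ) (hab : a < b) (f : ℝ → ℝ)
    (hcont : ContinuousOn f (Set.Icc a b))
    (hconv : ConvexOn ℝ (Set.Icc a b) f)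
    (fa' fb' : ℝ) (hfa : 0 < fa') (hfb : 0 < fb')
    (ha : HasDerivWithinAt f fa' (Set.Ici a) a)
    (hb : HasDerivWithinAt f fb' (Set.Iic b) b) :
    ∫ x in a..b, |f x - (f a + (f b - f a) / (b - a) * (x - a))|
      ≤ (f b - f a) ^ 2 / 8 * |1 / fa' - 1 / fb'| := by
  have hL : (0:ℝ) < b - a := by linarith
  obtain ⟨s, hs⟩ : ∃ s : ℝ, s = (f b - f a) / (b - a) := ⟨_, rfl⟩
  rw [← hs]
  have hfab : f b - f a = s * (b - a) := by rw [hs]; field_simp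
  have haI : a ∈ Set.Icc a b := ⟨le_rfl, hab.le⟩
  have hbI : b ∈ Set.Icc a b := ⟨hab.le, le_rfl⟩
  have ha' : HasDerivWithinAt f fa' (Set.Ioi a) a := ha.mono Set.Ioi_subset_Ici_self
  have hb' : HasDerivWithinAt f fb' (Set.Iio b) b := hb.mono Set.Iio_subset_Iic_self
  -- fa' ≤ s ≤ fb'
  have hs1 : fa' ≤ s := by
    rw [hs]
    have := hconv.le_slope_of_hasDerivWithinAt_Ioi haI hbI hab ha'
    rwa [slope_def_field] at this
  have hs2 : s ≤ fb' := by
    rw [hs]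
    have := hconv.slope_le_of_hasDerivWithinAt_Iio haI hbI hab hb'
    rwa [slope_def_field] at this
  obtain ⟨p, hp⟩ : ∃ p : ℝ, p = s - fa' := ⟨_, rfl⟩
  obtain ⟨q, hq⟩ : ∃ q : ℝ, q = fb' - s := ⟨_, rfl⟩
  have hp0 : 0 ≤ p := by rw [hp]; linarith
  have hq0 : 0 ≤ q := by rw [hq]; linarith
  -- pointwise bounds
  have hub : ∀ x ∈ Set.Icc a b, f x ≤ f a + s * (x - a) := by
    intro x hx
    rcases eq_or_lt_of_le hx.1 with rfl | hax
    · simp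
    rcases eq_or_lt_of_le hx.2 with rfl | hxb
    · nlinarith
    have h2 := hconv.secant_mono haI hx hbI (ne_of_gt hax) hab.ne' hx.2
    rw [div_le_div_iff₀ (by linarith) hL] at h2
    nlinarith
  have hlb1 : ∀ x ∈ Set.Icc a b, f a + fa' * (x - a) ≤ f x := by
    intro x hx
    rcases eq_or_lt_of_le hx.1 with rfl | hax
    · simp
    have h2 := hconv.le_slope_of_hasDerivWithinAt_Ioi haI hx hax ha'
    rw [slope_def_field, le_div_iff₀ (by linarith)] at h2
    nlinarith
  have hlb2 : ∀ x ∈ Set.Icc a b, f b + fb' * (x - b) ≤ f x := by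
    intro x hx
    rcases eq_or_lt_of_le hx.2 with rfl | hxb
    · simp
    have h2 := hconv.slope_le_of_hasDerivWithinAt_Iio hx hbI hxb hb'
    rw [slope_def_field, div_le_iff₀ (by linarith)] at h2
    nlinarith
  have g1 : ∀ x ∈ Set.Icc a b, |f x - (f a + s * (x - a))| ≤ p * (x - a) := by
    intro x hx
    rw [abs_sub_comm, abs_of_nonneg (by linarith [hub x hx])]
    have := hlb1 x hx
    simp only [hp]; nlinarith
  have g2 : ∀ x ∈ Set.Icc a b, |f x - (f a + s * (x - a))| ≤ q * (b - x) := by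
    intro x hx
    rw [abs_sub_comm, abs_of_nonneg (by linarith [hub x hx])]
    have := hlb2 x hx
    simp only [hq]; nlinarith
  -- integrability
  have hIcc : Set.uIcc a b = Set.Icc a b := Set.uIcc_of_le hab.le
  have hcontg : ContinuousOn (fun x => |f x - (f a + s * (x - a))|) (Set.Icc a b) :=
    (hcont.sub (Continuous.continuousOn (continuous_const.add (continuous_const.mul (continuous_id.sub continuous_const))))).abs
  have hInt : IntervalIntegrable (fun x => |f x - (f a + s * (x - a))|)
      MeasureTheory.volume a b := by
    apply ContinuousOn.intervalIntegrable; rwa [hIcc]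
  have hRHS : (0:ℝ) ≤ (f b - f a) ^ 2 / 8 * |1 / fa' - 1 / fb'| := by positivity
  rcases eq_or_lt_of_le hp0 with hp1 | hp1
  · have h0 : ∫ x in a..b, |f x - (f a + s * (x - a))| ≤ ∫ _x in a..b, (0:ℝ) := by
      apply intervalIntegral.integral_mono_on hab.le hInt intervalIntegrable_const
      intro x hx; have := g1 x hx; rw [← hp1] at this; simpa using this
    simp only [intervalIntegral.integral_const, smul_zero] at h0
    linarith
  rcases eq_or_lt_of_le hq0 with hq1 | hq1
  · have h0 : ∫ x in a..b, |f x - (f a + s * (x - a))| ≤ ∫ _x in a..b, (0:ℝ) := by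
      apply intervalIntegral.integral_mono_on hab.le hInt intervalIntegrable_const
      intro x hx; have := g2 x hx; rw [← hq1] at this; simpa using this
    simp only [intervalIntegral.integral_const, smul_zero] at h0
    linarith
  -- main case
  have hpq : 0 < p + q := by linarith
  obtain ⟨c, hc⟩ : ∃ c : ℝ, c = a + q * (b - a) / (p + q) := ⟨_, rfl⟩
  have hca : c - a = q * (b - a) / (p + q) := by rw [hc]; ring
  have hbc : b - c = p * (b - a) / (p + q) := by rw [hc]; field_simp; ring
  have hac : a ≤ c := by
    have : (0:ℝ) ≤ q * (b - a) / (p + q) := by positivity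
    linarith [hca]
  have hcb : c ≤ b := by
    have : (0:ℝ) ≤ p * (b - a) / (p + q) := by positivity
    linarith [hbc]
  have hsub1 : Set.Icc a c ⊆ Set.Icc a b := Set.Icc_subset_Icc le_rfl hcb
  have hsub2 : Set.Icc c b ⊆ Set.Icc a b := Set.Icc_subset_Icc hac le_rfl
  have hInt1 : IntervalIntegrable (fun x => |f x - (f a + s * (x - a))|)
      MeasureTheory.volume a c := hInt.mono_set (by
        rw [hIcc, Set.uIcc_of_le hac]; exact hsub1)
  have hInt2 : IntervalIntegrable (fun x => |f x - (f a + s * (x - a))|)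
      MeasureTheory.volume c b := hInt.mono_set (by
        rw [hIcc, Set.uIcc_of_le hcb]; exact hsub2)
  rw [← intervalIntegral.integral_add_adjacent_intervals hInt1 hInt2]
  have I1 : ∫ x in a..c, |f x - (f a + s * (x - a))| ≤ p * (c - a) ^ 2 / 2 := by
    have comp : ∫ x in a..c, p * (x - a) = p * (c - a) ^ 2 / 2 := by
      rw [intervalIntegral.integral_const_mul]
      have := intervalIntegral.integral_comp_sub_right (a := a) (b := c) (fun x => x) a
      rw [this, sub_self, integral_id]
      ring
    rw [← comp]
    apply intervalIntegral.integral_mono_on hac hInt1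
    · exact Continuous.intervalIntegrable (continuous_const.mul (continuous_id.sub continuous_const)) a c
    · intro x hx; exact g1 x (hsub1 hx)
  have I2 : ∫ x in c..b, |f x - (f a + s * (x - a))| ≤ q * (b - c) ^ 2 / 2 := by
    have comp : ∫ x in c..b, q * (b - x) = q * (b - c) ^ 2 / 2 := by
      rw [intervalIntegral.integral_const_mul]
      have := intervalIntegral.integral_comp_sub_left (a := c) (b := b) (fun x => x) b
      rw [this, sub_self, integral_id]
      ring
    rw [← comp]
    apply intervalIntegral.integral_mono_on hcb hInt2
    · exact Continuous.intervalIntegrable (continuous_const.mul (continuous_const.sub continuous_id)) c b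
    · intro x hx; exact g2 x (hsub2 hx)
  -- final arithmetic
  have hfa' : fa' = s - p := by rw [hp]; ring
  have hfb' : fb' = s + q := by rw [hq]; ring
  have hkey : 4 * p * q * fa' * fb' ≤ s ^ 2 * (p + q) ^ 2 := by
    rw [hfa', hfb']; nlinarith [sq_nonneg (s * (p - q) + 2 * p * q)]
  have habs : |1 / fa' - 1 / fb'| = 1 / fa' - 1 / fb' := by
    apply abs_of_nonneg
    have : 1 / fb' ≤ 1 / fa' := one_div_le_one_div_of_le hfa (by linarith)
    linarith
  have e1 : p * (c - a) ^ 2 / 2 + q * (b - c) ^ 2 / 2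
      = p * q * (b - a) ^ 2 / (2 * (p + q)) := by
    rw [hca, hbc]; field_simp; ring
  have hpq2 : p + q = fb' - fa' := by rw [hp, hq]; ring
  have e2 : (f b - f a) ^ 2 / 8 * |1 / fa' - 1 / fb'|
      = s ^ 2 * (b - a) ^ 2 * (p + q) / (8 * (fa' * fb')) := by
    rw [habs, hfab, hpq2]; field_simp
  have final : p * q * (b - a) ^ 2 / (2 * (p + q))
      ≤ s ^ 2 * (b - a) ^ 2 * (p + q) / (8 * (fa' * fb')) := by
    rw [div_le_div_iff₀ (by linarith) (by positivity)]
    linarith [mul_le_mul_of_nonneg_right hkey (sq_nonneg (b - a))]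
  calc (∫ x in a..c, |f x - (f a + s * (x - a))|)
        + ∫ x in c..b, |f x - (f a + s * (x - a))|
      ≤ p * (c - a) ^ 2 / 2 + q * (b - c) ^ 2 / 2 := add_le_add I1 I2
    _ = p * q * (b - a) ^ 2 / (2 * (p + q)) := e1
    _ ≤ s ^ 2 * (b - a) ^ 2 * (p + q) / (8 * (fa' * fb')) := final
    _ = (f b - f a) ^ 2 / 8 * |1 / fa' - 1 / fb'| := e2.symm

lemma key2 (a b : ℝ) (hab : a < b) (f : ℝ → ℝ)
    (hcont : ContinuousOn f (Set.Icc a b))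
    (hconv : ConvexOn ℝ (Set.Icc a b) f)
    (hmono : StrictMonoOn f (Set.Icc a b) ∨ StrictAntiOn f (Set.Icc a b))
    (fa' fb' : ℝ) (ha' : fa' ≠ 0) (hb' : fb' ≠ 0)
    (ha : HasDerivWithinAt f fa' (Set.Ici a) a)
    (hb : HasDerivWithinAt f fb' (Set.Iic b) b) :
    ∫ x in a..b, |f x - (f a + (f b - f a) / (b - a) * (x - a))|
      ≤ (f b - f a) ^ 2 / 8 * |1 / fa' - 1 / fb'| := by
  rcases hmono with hm | hm
  · exact key a b hab f hcont hconv fa' fb'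
      ((aux_right a b hab f hm fa' ha).lt_of_ne (Ne.symm ha'))
      ((aux_left a b hab f hm fb' hb).lt_of_ne (Ne.symm hb')) ha hb
  · -- strictly decreasing: reflect x ↦ a + b - x
    have hmem : ∀ x ∈ Set.Icc a b, a + b - x ∈ Set.Icc a b := by
      intro x hx
      exact ⟨by linarith [hx.2], by linarith [hx.1]⟩
    have hgc : ContinuousOn (fun x => f (a + b - x)) (Set.Icc a b) :=
      hcont.comp (Continuous.continuousOn (by continuity)) hmem
    have hgconv : ConvexOn ℝ (Set.Icc a b) (fun x => f (a + b - x)) := by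
      refine ⟨convex_Icc a b, fun x hx y hy u v hu hv huv => ?_⟩
      have hxy : a + b - (u • x + v • y) = u • (a + b - x) + v • (a + b - y) := by
        simp only [smul_eq_mul]
        linear_combination -((a + b) * huv)
      show f (a + b - (u • x + v • y)) ≤ u • f (a + b - x) + v • f (a + b - y)
      rw [hxy]
      exact hconv.2 (hmem x hx) (hmem y hy) hu hv huv
    have hgm : StrictMonoOn (fun x => f (a + b - x)) (Set.Icc a b) := by
      intro x hx y hy hxy
      exact hm (hmem y hy) (hmem x hx) (by linarith)
    have hi1 : HasDerivWithinAt (fun x : ℝ => a + b - x) (-1) (Set.Ici a) a :=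
      (hasDerivWithinAt_id a (Set.Ici a)).const_sub (a + b)
    have hi2 : HasDerivWithinAt (fun x : ℝ => a + b - x) (-1) (Set.Iic b) b :=
      (hasDerivWithinAt_id b (Set.Iic b)).const_sub (a + b)
    have hb2 : HasDerivWithinAt f fb' (Set.Iic b) (a + b - a) := by
      rw [show a + b - a = b by ring]; exact hb
    have ha2 : HasDerivWithinAt f fa' (Set.Ici a) (a + b - b) := by
      rw [show a + b - b = a by ring]; exact ha
    have hga : HasDerivWithinAt (fun x => f (a + b - x)) (-fb') (Set.Ici a) a := by
      have := hb2.comp a hi1 (fun x hx => by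
        simp only [Set.mem_Iic]; have := Set.mem_Ici.mp hx; linarith)
      simpa [Function.comp_def] using this
    have hgb : HasDerivWithinAt (fun x => f (a + b - x)) (-fa') (Set.Iic b) b := by
      have := ha2.comp b hi2 (fun x hx => by
        simp only [Set.mem_Ici]; have := Set.mem_Iic.mp hx; linarith)
      simpa [Function.comp_def] using this
    have hposb : 0 < -fb' :=
      (aux_right a b hab _ hgm (-fb') hga).lt_of_ne (by simpa using hb')
    have hposa : 0 < -fa' :=
      (aux_left a b hab _ hgm (-fa') hgb).lt_of_ne (by simpa using ha')
    have hres := key a b hab _ hgc hgconv (-fb') (-fa') hposb hposa hga hgb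
    -- convert LHS
    have hL : (0:ℝ) < b - a := by linarith
    have lineq : ∀ x : ℝ, f b + (f a - f b) / (b - a) * (x - a)
        = f a + (f b - f a) / (b - a) * (a + b - x - a) := by
      intro x; field_simp; ring
    have hLHS : (∫ x in a..b, |f (a + b - x)
          - (f (a + b - a) + (f (a + b - b) - f (a + b - a)) / (b - a) * (x - a))|)
        = ∫ x in a..b, |f x - (f a + (f b - f a) / (b - a) * (x - a))| := by
      rw [show a + b - a = b by ring, show a + b - b = a by ring]
      have step : (∫ x in a..b, |f (a + b - x)
            - (f b + (f a - f b) / (b - a) * (x - a))|)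
          = ∫ x in a..b, (fun y => |f y - (f a + (f b - f a) / (b - a) * (y - a))|)
              (a + b - x) := by
        apply intervalIntegral.integral_congr
        intro x _
        simp only
        rw [lineq x]
      rw [step, intervalIntegral.integral_comp_sub_left
        (fun y => |f y - (f a + (f b - f a) / (b - a) * (y - a))|) (a + b)]
      rw [show a + b - b = a by ring, show a + b - a = b by ring]
    rw [hLHS] at hres
    -- convert RHS
    have hRHS : (f (a + b - b) - f (a + b - a)) ^ 2 / 8 * |1 / -fb' - 1 / -fa'|
        = (f b - f a) ^ 2 / 8 * |1 / fa' - 1 / fb'| := by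
      rw [show a + b - a = b by ring, show a + b - b = a by ring]
      rw [show (1:ℝ) / -fb' - 1 / -fa' = 1 / fa' - 1 / fb' by ring]
      rw [show (f a - f b) ^ 2 = (f b - f a) ^ 2 by ring]
    rw [hRHS] at hres
    exact hres

theorem stmt8 (a b : ℝ) (hab : a < b) (f : ℝ → ℝ)
    (hcont : ContinuousOn f (Set.Icc a b))
    (hcc : ConvexOn ℝ (Set.Icc a b) f ∨ ConcaveOn ℝ (Set.Icc a b) f)
    (hmono : StrictMonoOn f (Set.Icc a b) ∨ StrictAntiOn f (Set.Icc a b))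
    (fa' fb' : ℝ) (ha' : fa' ≠ 0) (hb' : fb' ≠ 0)
    (ha : HasDerivWithinAt f fa' (Set.Ici a) a)
    (hb : HasDerivWithinAt f fb' (Set.Iic b) b) :
    ∫ x in a..b, |f x - (f a + (f b - f a) / (b - a) * (x - a))|
      ≤ (f b - f a) ^ 2 / 8 * |1 / fa' - 1 / fb'| := by
  rcases hcc with hconv | hconc
  · exact key2 a b hab f hcont hconv hmono fa' fb' ha' hb' ha hb
  · -- concave: apply to -f
    have hconv : ConvexOn ℝ (Set.Icc a b) (fun x => -f x) := by
      simpa [Pi.neg_def] using hconc.neg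
    have hmono' : StrictMonoOn (fun x => -f x) (Set.Icc a b)
        ∨ StrictAntiOn (fun x => -f x) (Set.Icc a b) := by
      rcases hmono with hm | hm
      · right; intro x hx y hy hxy; simpa using hm hx hy hxy
      · left; intro x hx y hy hxy; simpa using hm hx hy hxy
    have hres := key2 a b hab (fun x => -f x) hcont.neg hconv hmono'
      (-fa') (-fb') (by simpa using ha') (by simpa using hb') ha.neg hb.neg
    have hLHS : (∫ x in a..b, |-f x - (-f a + (-f b - -f a) / (b - a) * (x - a))|)
        = ∫ x in a..b, |f x - (f a + (f b - f a) / (b - a) * (x - a))| := by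
      apply intervalIntegral.integral_congr
      intro x _
      simp only
      rw [show -f x - (-f a + (-f b - -f a) / (b - a) * (x - a))
        = -(f x - (f a + (f b - f a) / (b - a) * (x - a))) by ring, abs_neg]
    have hRHS : (-f b - -f a) ^ 2 / 8 * |1 / -fa' - 1 / -fb'|
        = (f b - f a) ^ 2 / 8 * |1 / fa' - 1 / fb'| := by
      rw [show (1:ℝ) / -fa' - 1 / -fb' = -(1 / fa' - 1 / fb') by ring, abs_neg]
      rw [show (-f b - -f a) ^ 2 = (f b - f a) ^ 2 by ring]
    rw [hLHS, hRHS] at hres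
    exact hres
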